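/- arXiv:0806.3978 — 4 statements merged into one kernel-verified Lean document; each statement's English description precedes it below -/
import Mathlib

section
/- Let (Ω, F, P) be a probability space and let X_1, X_2, … : Ω → ℕ be independent and identically distributed random variables with common probability mass function p satisfying H(p) < ∞. For each m let P̂^m denote the empirical distribution of the first m observations, P̂^m(r)(ω) = (1/m) #{k ≤ m : X_k(ω) = r}. Then, with probability 1, the plug-in entropy converges to the true entropy: lim_{m→∞} Σ_r −P̂^m(r) log P̂^m(r) = H(p). -/
open MeasureTheory ProbabilityTheory Filter Real

open Finset Topology


lemma entTerm_nonneg {x : ℝ} (h0 : 0 ≤ x) (h1 : x ≤ 1) : 0 ≤ -x * log x := by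
  rw [neg_mul, neg_nonneg]
  exact mul_nonpos_of_nonneg_of_nonpos h0 (log_nonpos h0 h1)

/-- Gibbs-type inequality for the empirical measure: plug-in entropy is at most
the empirical cross-entropy. -/
lemma gibbs_aux (p : ℕ → ℝ) (hp0 : ∀ r, 0 ≤ p r) (hp1 : HasSum p 1)
    (m : ℕ) (hm : 0 < m) (x : ℕ → ℕ) (hx : ∀ k, 0 < p (x k)) :
    ∑' r, -((((range m).filter fun k => x k = r).card : ℝ) / m) *
        log ((((range m).filter fun k => x k = r).card : ℝ) / m)
      ≤ (∑ k ∈ range m, -log (p (x k))) / m := by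
  classical
  set S : Finset ℕ := (range m).image x with hS
  set c : ℕ → ℝ := fun r => ((((range m).filter fun k => x k = r).card : ℝ) / m) with hc
  have hmR : (0:ℝ) < m := by exact_mod_cast hm
  have hczero : ∀ r ∉ S, c r = 0 := by
    intro r hr
    have : ((range m).filter fun k => x k = r) = ∅ := by
      rw [Finset.filter_eq_empty_iff]
      intro k hk hkr
      exact hr (Finset.mem_image.2 ⟨k, hk, hkr⟩)
    simp [hc, this]
  have htsum : (∑' r, -(c r) * log (c r)) = ∑ r ∈ S, -(c r) * log (c r) := by
    refine tsum_eq_sum ?_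
    intro r hr
    simp [hczero r hr]
  -- counts sum to m
  have hcount : ∑ r ∈ S, ((((range m).filter fun k => x k = r).card : ℝ)) = m := by
    have := Finset.sum_fiberwise_of_maps_to (t := S) (g := x)
      (fun k hk => Finset.mem_image.2 ⟨k, hk, rfl⟩) (fun _ => (1:ℝ))
    simpa [Finset.sum_const, nsmul_eq_mul, Finset.card_range] using this
  have hcsum : ∑ r ∈ S, c r = 1 := by
    simp only [hc, ← Finset.sum_div]
    rw [hcount]
    field_simp
  -- cross term
  have hcross : ∑ r ∈ S, c r * (-log (p r)) = (∑ k ∈ range m, -log (p (x k))) / m := by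
    have := Finset.sum_fiberwise_of_maps_to' (t := S) (g := x)
      (fun k hk => Finset.mem_image.2 ⟨k, hk, rfl⟩) (fun r => -log (p r))
    rw [← this, Finset.sum_div]
    refine Finset.sum_congr rfl fun r _ => ?_
    rw [Finset.sum_const, nsmul_eq_mul]
    simp only [hc]
    ring
  -- per-term bound
  have hterm : ∀ r ∈ S, -(c r) * log (c r) ≤ c r * (-log (p r)) + (p r - c r) := by
    intro r hrS
    obtain ⟨k, _, hkr⟩ := Finset.mem_image.1 hrS
    have hpr : 0 < p r := hkr ▸ hx k
    have hc0 : 0 ≤ c r := by positivity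
    rcases eq_or_lt_of_le hc0 with h | h
    · simp [← h]; positivity
    · have key : log (p r) - log (c r) ≤ p r / c r - 1 := by
        rw [← Real.log_div (ne_of_gt hpr) (ne_of_gt h)]
        exact Real.log_le_sub_one_of_pos (by positivity)
      have h2 := mul_le_mul_of_nonneg_left key (le_of_lt h)
      have h3 : c r * (p r / c r - 1) = p r - c r := by field_simp
      nlinarith
  calc ∑' r, -(c r) * log (c r) = ∑ r ∈ S, -(c r) * log (c r) := htsum
    _ ≤ ∑ r ∈ S, (c r * (-log (p r)) + (p r - c r)) := Finset.sum_le_sum hterm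
    _ = (∑ r ∈ S, c r * (-log (p r))) + ((∑ r ∈ S, p r) - 1) := by
        rw [Finset.sum_add_distrib, Finset.sum_sub_distrib, hcsum]
    _ ≤ (∑ k ∈ range m, -log (p (x k))) / m + ((∑ r ∈ S, p r) - 1) := by
        rw [hcross]
    _ ≤ (∑ k ∈ range m, -log (p (x k))) / m := by
        have : ∑ r ∈ S, p r ≤ 1 := sum_le_hasSum S (fun r _ => hp0 r) hp1
        linarith

/-- Strong consistency of the plug-in entropy estimator: for i.i.d. `ℕ`-valued
random variables with common probability mass function `p` of finite entropy,
the entropy of the empirical distribution converges almost surely to `H(p)`. -/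
theorem plugin_entropy_consistency
    {Ω : Type*} [MeasurableSpace Ω] (μ : Measure Ω) [IsProbabilityMeasure μ]
    (X : ℕ → Ω → ℕ) (hmeas : ∀ k, Measurable (X k))
    (hindep : iIndepFun X μ)
    (p : ℕ → ℝ) (hp0 : ∀ r, 0 ≤ p r) (hp1 : HasSum p 1)
    (hlaw : ∀ k r, μ {ω | X k ω = r} = ENNReal.ofReal (p r))
    (hH : Summable (fun r => -(p r) * log (p r)))
    (Phat : ℕ → Ω → ℕ → ℝ)
    (hPhat : ∀ m ω r,
      Phat m ω r = (((Finset.range m).filter (fun k => X k ω = r)).card : ℝ) / m) :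
    ∀ᵐ ω ∂μ, Tendsto (fun m => ∑' r, -(Phat m ω r) * log (Phat m ω r))
      atTop (nhds (∑' r, -(p r) * log (p r))) := by
  classical
  set g : ℕ → ℝ := fun n => -log (p n) with hgdef
  set H : ℝ := ∑' r, -(p r) * log (p r) with hHdef
  have hple : ∀ r, p r ≤ 1 := fun r => le_hasSum hp1 r fun j _ => hp0 j
  have hgnn : ∀ r, 0 ≤ g r := fun r => neg_nonneg.2 (log_nonpos (hp0 r) (hple r))
  -- identical distributions
  have hmap : ∀ k, μ.map (X k) = μ.map (X 0) := by
    intro k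
    refine Measure.ext_of_singleton fun r => ?_
    rw [Measure.map_apply (hmeas k) (measurableSet_singleton r),
        Measure.map_apply (hmeas 0) (measurableSet_singleton r)]
    show μ {ω | X k ω = r} = μ {ω | X 0 ω = r}
    rw [hlaw, hlaw]
  have hident : ∀ k, IdentDistrib (X k) (X 0) μ μ :=
    fun k => ⟨(hmeas k).aemeasurable, (hmeas 0).aemeasurable, hmap k⟩
  have hmapsing : ∀ r, μ.map (X 0) {r} = ENNReal.ofReal (p r) := by
    intro r
    rw [Measure.map_apply (hmeas 0) (measurableSet_singleton r)]
    exact hlaw 0 r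
  -- SLLN helper
  have hslln : ∀ f : ℕ → ℝ, Integrable (fun ω => f (X 0 ω)) μ →
      ∀ᵐ ω ∂μ, Tendsto (fun m => (∑ k ∈ range m, f (X k ω)) / m) atTop
        (𝓝 (∫ ω, f (X 0 ω) ∂μ)) := by
    intro f hint
    exact strong_law_ae_real (fun k ω => f (X k ω)) hint
      (fun i j hij => ((hindep.indepFun hij).comp
        (measurable_of_countable f) (measurable_of_countable f)))
      (fun i => (hident i).comp (measurable_of_countable f))
  -- SLLN for the indicators : empirical measure converges pointwise
  have hB : ∀ r, ∀ᵐ ω ∂μ, Tendsto (fun m => Phat m ω r) atTop (𝓝 (p r)) := by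
    intro r
    set f : ℕ → ℝ := fun n => if n = r then 1 else 0 with hf
    have hind : (fun ω => f (X 0 ω)) =
        Set.indicator {ω | X 0 ω = r} (fun _ => (1:ℝ)) := by
      funext ω
      simp [hf, Set.indicator_apply, Set.mem_setOf_eq]
    have hms : MeasurableSet {ω | X 0 ω = r} := (hmeas 0) (measurableSet_singleton r)
    have hint : Integrable (fun ω => f (X 0 ω)) μ := by
      rw [hind]
      exact (integrable_const (1:ℝ)).indicator hms
    have hval : ∫ ω, f (X 0 ω) ∂μ = p r := by
      rw [hind, integral_indicator_const (1:ℝ) hms, measureReal_def, hlaw 0 r,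
        ENNReal.toReal_ofReal (hp0 r), smul_eq_mul, mul_one]
    have := hslln f hint
    rw [hval] at this
    filter_upwards [this] with ω hω
    have heq : (fun m => Phat m ω r) = fun m => (∑ k ∈ range m, f (X k ω)) / m := by
      funext m
      rw [hPhat, hf]
      congr 1
      rw [Finset.sum_boole]
    rw [heq]
    exact hω
  -- SLLN for the log-likelihood
  have hintg' : Integrable g (μ.map (X 0)) := by
    refine ⟨(measurable_of_countable g).aestronglyMeasurable, ?_⟩
    rw [HasFiniteIntegral, lintegral_countable']
    have hsum : Summable (fun r => g r * p r) :=
      hH.congr fun r => by rw [hgdef]; ring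
    have heq : ∀ r : ℕ, ‖g r‖ₑ * (μ.map (X 0)) {r}
        = ENNReal.ofReal (g r * p r) := by
      intro r
      rw [hmapsing, Real.enorm_eq_ofReal (hgnn r), ← ENNReal.ofReal_mul (hgnn r)]
    rw [tsum_congr heq, ← ENNReal.ofReal_tsum_of_nonneg
      (fun r => mul_nonneg (hgnn r) (hp0 r)) hsum]
    exact ENNReal.ofReal_lt_top
  have hintg : Integrable (fun ω => g (X 0 ω)) μ := by
    rw [← Function.comp_def,
      ← integrable_map_measure (measurable_of_countable g).aestronglyMeasurable
        (hmeas 0).aemeasurable]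
    exact hintg'
  have hEg : ∫ ω, g (X 0 ω) ∂μ = H := by
    have h1 : ∫ ω, g (X 0 ω) ∂μ = ∫ n, g n ∂(μ.map (X 0)) := by
      rw [integral_map (hmeas 0).aemeasurable
        (measurable_of_countable g).aestronglyMeasurable]
    rw [h1, integral_countable' hintg', hHdef]
    refine tsum_congr fun r => ?_
    rw [measureReal_def, hmapsing, ENNReal.toReal_ofReal (hp0 r), smul_eq_mul, hgdef]
    ring
  have hA := hslln g hintg
  rw [hEg] at hA
  -- a.s. positivity of p along the sample
  have hpos : ∀ᵐ ω ∂μ, ∀ k, 0 < p (X k ω) := by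
    rw [ae_all_iff]
    intro k
    rw [ae_iff]
    have hsub : {ω | ¬ 0 < p (X k ω)} ⊆ ⋃ r ∈ {r : ℕ | p r = 0}, {ω | X k ω = r} := by
      intro ω hω
      simp only [Set.mem_setOf_eq, not_lt] at hω
      have h0 : p (X k ω) = 0 := le_antisymm hω (hp0 _)
      exact Set.mem_biUnion h0 rfl
    refine measure_mono_null hsub ?_
    refine (measure_biUnion_null_iff (Set.to_countable _)).2 fun r hr => ?_
    have hr' : p r = 0 := hr
    rw [hlaw k r, hr']
    simp
  rw [ae_all_iff.symm] at hB
  filter_upwards [hA, hB, hpos] with ω hA hB hpos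
  set E : ℕ → ℝ := fun m => ∑' r, -(Phat m ω r) * log (Phat m ω r) with hE
  set A : ℕ → ℝ := fun m => (∑ k ∈ range m, g (X k ω)) / m with hAdef
  have hP01 : ∀ m r, 0 ≤ Phat m ω r ∧ Phat m ω r ≤ 1 := by
    intro m r
    rw [hPhat]
    rcases Nat.eq_zero_or_pos m with h | h
    · subst h; simp
    · have hmR : (0:ℝ) < m := by exact_mod_cast h
      refine ⟨by positivity, ?_⟩
      rw [div_le_one hmR]
      exact_mod_cast (Finset.card_filter_le _ _).trans_eq (Finset.card_range m)
  have hsummE : ∀ m, Summable (fun r => -(Phat m ω r) * log (Phat m ω r)) := by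
    intro m
    refine summable_of_ne_finset_zero (s := (range m).image (fun k => X k ω)) ?_
    intro r hr
    have : ((range m).filter fun k => X k ω = r) = ∅ := by
      rw [Finset.filter_eq_empty_iff]
      intro k hk hkr
      exact hr (Finset.mem_image.2 ⟨k, hk, hkr⟩)
    rw [hPhat, this]
    simp
  have hEnn : ∀ m, 0 ≤ E m :=
    fun m => tsum_nonneg fun r => entTerm_nonneg (hP01 m r).1 (hP01 m r).2
  have hupper : ∀ᶠ m in atTop, E m ≤ A m := by
    rw [eventually_atTop]
    refine ⟨1, fun m hm => ?_⟩
    have := gibbs_aux p hp0 hp1 m hm (fun k => X k ω) (fun k => hpos k)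
    have hEeq : E m = ∑' r, -((((range m).filter fun k => X k ω = r).card : ℝ) / m) *
        log ((((range m).filter fun k => X k ω = r).card : ℝ) / m) := by
      rw [hE]
      exact tsum_congr fun r => by rw [hPhat]
    rw [hEeq, hAdef]
    exact this
  have hbddle : IsBoundedUnder (· ≤ ·) atTop E :=
    hA.isBoundedUnder_le.mono_le hupper
  have hbddge : IsBoundedUnder (· ≥ ·) atTop E :=
    isBoundedUnder_of ⟨0, hEnn⟩
  have hlimsup : limsup E atTop ≤ H := by
    calc limsup E atTop ≤ limsup A atTop :=
          limsup_le_limsup hupper hbddge.isCoboundedUnder_le hA.isBoundedUnder_le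
      _ = H := hA.limsup_eq
  have hliminf : H ≤ liminf E atTop := by
    have key : ∀ s : Finset ℕ, ∑ r ∈ s, -(p r) * log (p r) ≤ liminf E atTop := by
      intro s
      have htend : Tendsto (fun m => ∑ r ∈ s, -(Phat m ω r) * log (Phat m ω r))
          atTop (𝓝 (∑ r ∈ s, -(p r) * log (p r))) := by
        refine tendsto_finset_sum s fun r _ => ?_
        have h1 : Tendsto (fun m => Phat m ω r * log (Phat m ω r)) atTop
            (𝓝 (p r * log (p r))) := (continuous_mul_log.tendsto (p r)).comp (hB r)
        have := h1.neg
        simp only [neg_mul] at this ⊢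
        exact this
      have hle : ∀ m, (∑ r ∈ s, -(Phat m ω r) * log (Phat m ω r)) ≤ E m :=
        fun m => (hsummE m).sum_le_tsum s
          (fun r _ => entTerm_nonneg (hP01 m r).1 (hP01 m r).2)
      calc ∑ r ∈ s, -(p r) * log (p r) = liminf
            (fun m => ∑ r ∈ s, -(Phat m ω r) * log (Phat m ω r)) atTop :=
            htend.liminf_eq.symm
        _ ≤ liminf E atTop := liminf_le_liminf (Eventually.of_forall hle)
            htend.isBoundedUnder_ge hbddle.isCoboundedUnder_ge
    exact le_of_tendsto hH.hasSum (Eventually.of_forall key)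
  exact tendsto_of_le_liminf_of_limsup_le hliminf hlimsup hbddle hbddge
end

section
/- Let (Ω, F, P) be a probability space, let n ≥ 1, and for each t ∈ {1,…,n} let p_t be a probability mass function on ℕ with H(p_t) < ∞, and let R_t^1, R_t^2, … : Ω → ℕ be a sequence of random variables that is independent and identically distributed with common law p_t (no independence across different t is assumed). Let p̄(r) = (1/n) Σ_{t=1}^n p_t(r), define the empirical distributions P̂_t^m(r)(ω) = (1/m) #{k ≤ m : R_t^k(ω) = r} and P̂^m(r) = (1/n) Σ_{t=1}^n P̂_t^m(r). Then, with probability 1, lim_{m→∞} Σ_r −P̂^m(r) log P̂^m(r) = H(p̄). -/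
open MeasureTheory ProbabilityTheory Filter Real Topology

lemma slln_discrete {Ω : Type*} [MeasurableSpace Ω] (μ : Measure Ω) [IsProbabilityMeasure μ]
    (X : ℕ → Ω → ℕ) (hXmeas : ∀ k, Measurable (X k))
    (hXindep : iIndepFun X μ)
    (q : ℕ → ℝ) (hq0 : ∀ r, 0 ≤ q r)
    (hXlaw : ∀ k r, μ {ω | X k ω = r} = ENNReal.ofReal (q r))
    (g : ℕ → ℝ) (hg : Summable fun r => q r * ‖g r‖) :
    ∀ᵐ ω ∂μ, Tendsto (fun m : ℕ => (∑ k ∈ Finset.range m, g (X k ω)) / m) atTop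
      (𝓝 (∑' r, q r * g r)) := by
  have mg : Measurable g := measurable_from_nat
  have hmap : ∀ k, μ.map (X k) = μ.map (X 0) := by
    intro k
    refine MeasureTheory.Measure.ext_of_singleton fun r => ?_
    rw [Measure.map_apply (hXmeas k) (measurableSet_singleton r),
        Measure.map_apply (hXmeas 0) (measurableSet_singleton r)]
    have h1 : (X k) ⁻¹' {r} = {ω | X k ω = r} := rfl
    have h2 : (X 0) ⁻¹' {r} = {ω | X 0 ω = r} := rfl
    rw [h1, h2, hXlaw, hXlaw]
  have hident : ∀ k, IdentDistrib (X k) (X 0) μ μ :=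
    fun k => ⟨(hXmeas k).aemeasurable, (hXmeas 0).aemeasurable, hmap k⟩
  have hlaw0 : ∀ r : ℕ, (μ.map (X 0)) {r} = ENNReal.ofReal (q r) := by
    intro r
    rw [Measure.map_apply (hXmeas 0) (measurableSet_singleton r)]
    exact hXlaw 0 r
  have hgq : Summable fun r => ‖g r‖ * q r := by
    simpa [mul_comm] using hg
  have hgint : Integrable g (μ.map (X 0)) := by
    refine ⟨mg.aestronglyMeasurable, ?_⟩
    rw [HasFiniteIntegral, MeasureTheory.lintegral_countable']
    have : ∀ r : ℕ, ‖g r‖ₑ * (μ.map (X 0)) {r}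
        = ENNReal.ofReal (‖g r‖ * q r) := by
      intro r
      rw [hlaw0, ENNReal.ofReal_mul (norm_nonneg _), ofReal_norm]
    rw [tsum_congr this, ← ENNReal.ofReal_tsum_of_nonneg
      (fun r => mul_nonneg (norm_nonneg _) (hq0 r)) hgq]
    exact ENNReal.ofReal_lt_top
  have hint : Integrable (fun ω => g (X 0 ω)) μ :=
    (integrable_map_measure mg.aestronglyMeasurable (hXmeas 0).aemeasurable).mp hgint
  have hmean : (∫ ω, g (X 0 ω) ∂μ) = ∑' r, q r * g r := by
    rw [← integral_map (hXmeas 0).aemeasurable mg.aestronglyMeasurable,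
        integral_countable' hgint]
    refine tsum_congr fun r => ?_
    rw [measureReal_def, hlaw0, ENNReal.toReal_ofReal (hq0 r), smul_eq_mul]
  have hpind : Pairwise (Function.onFun (IndepFun · · μ) fun k => fun ω => g (X k ω)) := by
    intro i j hij
    exact (hXindep.indepFun hij).comp mg mg
  have := strong_law_ae_real (fun k ω => g (X k ω)) hint hpind
    (fun i => (hident i).comp mg)
  rw [hmean] at this
  exact this

/-- Statement 1 of the Theorem: under the repeated trial assumption, the plug-in
estimate of the total entropy converges almost surely to the entropy of the
time-averaged distribution `pbar`. -/
theorem plugin_total_entropy_converges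
    {Ω : Type*} [MeasurableSpace Ω] (μ : Measure Ω) [IsProbabilityMeasure μ]
    (n : ℕ) (hn : 1 ≤ n) (p : Fin n → ℕ → ℝ)
    (hp0 : ∀ t r, 0 ≤ p t r) (hp1 : ∀ t, HasSum (p t) 1)
    (hH : ∀ t, Summable (fun r => -(p t r) * log (p t r)))
    (R : Fin n → ℕ → Ω → ℕ) (hmeas : ∀ t k, Measurable (R t k))
    (hindep : ∀ t, iIndepFun (R t) μ)
    (hlaw : ∀ t k r, μ {ω | R t k ω = r} = ENNReal.ofReal (p t r))
    (pbar : ℕ → ℝ) (hpbar : ∀ r, pbar r = (1 / n) * ∑ t, p t r)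
    (Phat_t : Fin n → ℕ → Ω → ℕ → ℝ)
    (hPhat_t : ∀ t m ω r,
      Phat_t t m ω r = (((Finset.range m).filter (fun k => R t k ω = r)).card : ℝ) / m)
    (Phat : ℕ → Ω → ℕ → ℝ)
    (hPhat : ∀ m ω r, Phat m ω r = (1 / n) * ∑ t, Phat_t t m ω r) :
    ∀ᵐ ω ∂μ, Tendsto (fun m => ∑' r, -(Phat m ω r) * log (Phat m ω r))
      atTop (nhds (∑' r, -(pbar r) * log (pbar r))) := by
  have npos : (0:ℝ) < n := by exact_mod_cast hn
  have hple1 : ∀ t r, p t r ≤ 1 := fun t r => le_hasSum (hp1 t) r (fun b _ => hp0 t b)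
  have hpbar0 : ∀ r, 0 ≤ pbar r := by
    intro r; rw [hpbar]
    exact mul_nonneg (by positivity) (Finset.sum_nonneg fun t _ => hp0 t r)
  have hpbar_sum : HasSum pbar 1 := by
    have h1 : HasSum (fun r => ∑ t, p t r) ((n : ℝ)) := by
      have := hasSum_sum (s := (Finset.univ : Finset (Fin n))) (fun t _ => hp1 t)
      simpa using this
    have h2 := h1.mul_left (1 / (n:ℝ))
    have h3 : (1/(n:ℝ)) * n = 1 := by field_simp
    rw [h3] at h2
    have : pbar = fun r => (1/(n:ℝ)) * ∑ t, p t r := funext hpbar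
    rw [this]; exact h2
  have hpbar_le1 : ∀ r, pbar r ≤ 1 := fun r => le_hasSum hpbar_sum r (fun b _ => hpbar0 b)
  have hple : ∀ t r, p t r ≤ n * pbar r := by
    intro t r
    rw [hpbar, ← mul_assoc, mul_one_div_cancel npos.ne', one_mul]
    exact Finset.single_le_sum (fun t' _ => hp0 t' r) (Finset.mem_univ t)
  set g : ℕ → ℝ := fun r => -Real.log (pbar r) with hgdef
  have hg0 : ∀ r, 0 ≤ g r := fun r =>
    neg_nonneg.mpr (Real.log_nonpos (hpbar0 r) (hpbar_le1 r))
  -- summability of entropy of pbar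
  have hsumH : Summable fun r => pbar r * g r := by
    have hF : Summable (fun r => (1/(n:ℝ)) * ∑ t, (-(p t r) * Real.log (p t r)
        + p t r * Real.log n)) := by
      refine Summable.mul_left _ (summable_sum fun t _ => ?_)
      exact (hH t).add ((hp1 t).summable.mul_right _)
    refine Summable.of_nonneg_of_le (fun r => mul_nonneg (hpbar0 r) (hg0 r)) (fun r => ?_) hF
    have hexp : pbar r * g r = (1/(n:ℝ)) * ∑ t, p t r * g r := by
      rw [hpbar, mul_assoc, Finset.sum_mul]
    rw [hexp]
    refine mul_le_mul_of_nonneg_left (Finset.sum_le_sum fun t _ => ?_) (by positivity)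
    rcases eq_or_lt_of_le (hp0 t r) with h0 | h0
    · simp [← h0]
    · have hpb : 0 < pbar r := lt_of_lt_of_le (div_pos h0 npos)
        ((div_le_iff₀ npos).mpr (by rw [mul_comm]; exact hple t r))
      have hlog : g r ≤ -Real.log (p t r) + Real.log n := by
          have h1 : p t r / n ≤ pbar r := (div_le_iff₀ npos).mpr (by
            rw [mul_comm]; exact hple t r)
          have h2 : Real.log (p t r / n) ≤ Real.log (pbar r) :=
            Real.log_le_log (by positivity) h1
          rw [Real.log_div h0.ne' npos.ne'] at h2
          simp only [hgdef, neg_le, neg_add, neg_neg]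
          linarith
      calc p t r * g r ≤ p t r * (-Real.log (p t r) + Real.log n) :=
            mul_le_mul_of_nonneg_left hlog (hp0 t r)
        _ = -(p t r) * Real.log (p t r) + p t r * Real.log n := by ring
  have hsum_t : ∀ t, Summable fun r => p t r * ‖g r‖ := by
    intro t
    refine Summable.of_nonneg_of_le
      (fun r => mul_nonneg (hp0 t r) (norm_nonneg _)) (fun r => ?_) (hsumH.mul_left (n:ℝ))
    rw [Real.norm_of_nonneg (hg0 r), ← mul_assoc]
    exact mul_le_mul_of_nonneg_right (hple t r) (hg0 r)
  -- Event 1 : frequencies converge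
  have E1 : ∀ᵐ ω ∂μ, ∀ (t : Fin n) (r : ℕ),
      Tendsto (fun m => Phat_t t m ω r) atTop (𝓝 (p t r)) := by
    rw [ae_all_iff]; intro t; rw [ae_all_iff]; intro r
    have hs : Summable fun r' => p t r' * ‖(fun x => if x = r then (1:ℝ) else 0) r'‖ := by
      refine summable_of_ne_finset_zero (s := {r}) fun b hb => ?_
      simp only [Finset.mem_singleton] at hb
      simp [hb]
    have := slln_discrete μ (R t) (hmeas t) (hindep t) (p t) (hp0 t) (hlaw t)
      (fun x => if x = r then (1:ℝ) else 0) hs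
    have htsum : ∑' r', p t r' * (if r' = r then (1:ℝ) else 0) = p t r := by
      rw [tsum_eq_sum (s := {r}) (fun b hb => by
        simp only [Finset.mem_singleton] at hb; simp [hb])]
      simp
    rw [htsum] at this
    filter_upwards [this] with ω hω
    have : (fun m => Phat_t t m ω r)
        = fun m : ℕ => (∑ k ∈ Finset.range m, if R t k ω = r then (1:ℝ) else 0) / m := by
      funext m
      rw [hPhat_t, Finset.sum_boole]
    rw [this]
    exact hω
  -- Event 2 : cross-entropy averages converge
  have E2 : ∀ᵐ ω ∂μ, ∀ (t : Fin n),
      Tendsto (fun m : ℕ => (∑ k ∈ Finset.range m, g (R t k ω)) / m) atTop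
        (𝓝 (∑' r, p t r * g r)) := by
    rw [ae_all_iff]; intro t
    exact slln_discrete μ (R t) (hmeas t) (hindep t) (p t) (hp0 t) (hlaw t) g (hsum_t t)
  -- Event 3 : no observations at null points
  have E3 : ∀ᵐ ω ∂μ, ∀ r : ℕ, pbar r = 0 → ∀ (t : Fin n) (k : ℕ), R t k ω ≠ r := by
    rw [ae_all_iff]; intro r
    by_cases h : pbar r = 0
    · have hp00 : ∀ t, p t r = 0 := by
        intro t
        have hsum0 : ∑ t', p t' r = 0 := by
          have := hpbar r; rw [h] at this
          field_simp at this
          simpa using this.symm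
        exact (Finset.sum_eq_zero_iff_of_nonneg (fun t' _ => hp0 t' r)).mp hsum0 t
          (Finset.mem_univ t)
      have : ∀ᵐ ω ∂μ, ∀ (t : Fin n) (k : ℕ), R t k ω ≠ r := by
        rw [ae_all_iff]; intro t; rw [ae_all_iff]; intro k
        have hm : μ {ω | R t k ω = r} = 0 := by rw [hlaw, hp00, ENNReal.ofReal_zero]
        rw [ae_iff]
        simpa using hm
      filter_upwards [this] with ω hω _ using hω
    · filter_upwards with ω hc using absurd hc h
  filter_upwards [E1, E2, E3] with ω h1 h2 h3
  -- pointwise facts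
  have hPt0 : ∀ (t : Fin n) m r, 0 ≤ Phat_t t m ω r := by
    intro t m r; rw [hPhat_t]; positivity
  have hPt1 : ∀ (t : Fin n) m r, Phat_t t m ω r ≤ 1 := by
    intro t m r; rw [hPhat_t]
    rcases Nat.eq_zero_or_pos m with hm | hm
    · simp [hm]
    · rw [div_le_one (by exact_mod_cast hm)]
      exact_mod_cast (Finset.card_filter_le _ _).trans (Finset.card_range m).le
  have hq0m : ∀ m r, 0 ≤ Phat m ω r := by
    intro m r; rw [hPhat]
    exact mul_nonneg (by positivity) (Finset.sum_nonneg fun t _ => hPt0 t m r)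
  have hq1m : ∀ m r, Phat m ω r ≤ 1 := by
    intro m r; rw [hPhat]
    calc (1/(n:ℝ)) * ∑ t, Phat_t t m ω r ≤ (1/(n:ℝ)) * ∑ t : Fin n, 1 :=
          mul_le_mul_of_nonneg_left (Finset.sum_le_sum fun t _ => hPt1 t m r) (by positivity)
      _ = 1 := by field_simp; simp
  -- finite support
  have hFsupp : ∀ m r, (∀ (t : Fin n), r ∉ (Finset.range m).image (fun k => R t k ω)) →
      Phat m ω r = 0 := by
    intro m r hr
    rw [hPhat]
    have : ∀ t : Fin n, Phat_t t m ω r = 0 := by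
      intro t
      rw [hPhat_t]
      have : (Finset.range m).filter (fun k => R t k ω = r) = ∅ := by
        refine Finset.filter_eq_empty_iff.mpr fun k hk hkr => hr t ?_
        exact Finset.mem_image.mpr ⟨k, hk, hkr⟩
      rw [this]; simp
    simp [Finset.sum_congr rfl (fun t _ => this t)]
  set F : ℕ → Finset ℕ :=
    fun m => Finset.univ.biUnion (fun t : Fin n => (Finset.range m).image (fun k => R t k ω))
    with hFdef
  have hFsupp' : ∀ m r, r ∉ F m → Phat m ω r = 0 := by
    intro m r hr
    refine hFsupp m r fun t ht => hr ?_
    exact Finset.mem_biUnion.mpr ⟨t, Finset.mem_univ t, ht⟩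
  -- the key counting identity
  have key_t : ∀ (t : Fin n) (m : ℕ) (h : ℕ → ℝ),
      ∑' r, (((Finset.range m).filter (fun k => R t k ω = r)).card : ℝ) * h r
        = ∑ k ∈ Finset.range m, h (R t k ω) := by
    intro t m h
    rw [tsum_eq_sum (s := (Finset.range m).image (fun k => R t k ω)) (fun r hr => ?_)]
    · rw [← Finset.sum_fiberwise_of_maps_to
        (fun k hk => Finset.mem_image_of_mem (fun k => R t k ω) hk)
        (fun k => h (R t k ω))]
      refine Finset.sum_congr rfl fun r hr => ?_
      rw [Finset.sum_congr rfl (fun k hk => congrArg h (Finset.mem_filter.mp hk).2),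
        Finset.sum_const, nsmul_eq_mul]
    · have : (Finset.range m).filter (fun k => R t k ω = r) = ∅ := by
        refine Finset.filter_eq_empty_iff.mpr fun k hk hkr => hr ?_
        exact Finset.mem_image.mpr ⟨k, hk, hkr⟩
      rw [this]; simp
  have hsupp_t : ∀ (t : Fin n) (m : ℕ) (h : ℕ → ℝ) (r : ℕ),
      r ∉ (Finset.range m).image (fun k => R t k ω) →
      (((Finset.range m).filter (fun k => R t k ω = r)).card : ℝ) * h r / m = 0 := by
    intro t m h r hr
    have : (Finset.range m).filter (fun k => R t k ω = r) = ∅ := by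
      refine Finset.filter_eq_empty_iff.mpr fun k hk hkr => hr ?_
      exact Finset.mem_image.mpr ⟨k, hk, hkr⟩
    rw [this]; simp
  have hPhat_tsum : ∀ (m : ℕ) (h : ℕ → ℝ),
      ∑' r, Phat m ω r * h r
        = (1/(n:ℝ)) * ∑ t, (∑ k ∈ Finset.range m, h (R t k ω)) / m := by
    intro m h
    have e1 : ∀ r, Phat m ω r * h r
        = ∑ t : Fin n, (1/(n:ℝ)) * ((((Finset.range m).filter
            (fun k => R t k ω = r)).card : ℝ) * h r / m) := by
      intro r
      rw [hPhat, Finset.mul_sum, Finset.sum_mul]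
      refine Finset.sum_congr rfl fun t _ => ?_
      rw [hPhat_t]
      ring
    rw [tsum_congr e1, Summable.tsum_finsetSum (fun t _ => ?_)]
    · rw [Finset.mul_sum]
      refine Finset.sum_congr rfl fun t _ => ?_
      rw [tsum_mul_left]
      congr 1
      rw [tsum_div_const, key_t t m h]
    · refine (summable_of_ne_finset_zero
        (s := (Finset.range m).image (fun k => R t k ω)) fun r hr => ?_).mul_left _
      exact hsupp_t t m h r hr
  -- summability of the various per-m series
  have Sq : ∀ m, Summable (fun r => Phat m ω r) :=
    fun m => summable_of_ne_finset_zero (s := F m) (fun r hr => hFsupp' m r hr)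
  have Sqg : ∀ m, Summable (fun r => Phat m ω r * g r) :=
    fun m => summable_of_ne_finset_zero (s := F m)
      (fun r hr => by rw [hFsupp' m r hr, zero_mul])
  have Sent : ∀ m, Summable (fun r => -(Phat m ω r) * Real.log (Phat m ω r)) :=
    fun m => summable_of_ne_finset_zero (s := F m)
      (fun r hr => by rw [hFsupp' m r hr]; simp)
  -- total mass one
  have claim2 : ∀ m : ℕ, 1 ≤ m → ∑' r, Phat m ω r = 1 := by
    intro m hm
    have h1' := hPhat_tsum m (fun _ => 1)
    have hL : ∑' r, Phat m ω r * (1:ℝ) = ∑' r, Phat m ω r :=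
      tsum_congr fun r => mul_one _
    rw [hL] at h1'
    rw [h1']
    have hm0 : (m:ℝ) ≠ 0 := by positivity
    simp [div_self hm0]
    field_simp
  set C : ℕ → ℝ := fun m => (1/(n:ℝ)) * ∑ t, (∑ k ∈ Finset.range m, g (R t k ω)) / m
    with hCdef
  have claim1 : ∀ m, ∑' r, Phat m ω r * g r = C m := fun m => hPhat_tsum m g
  -- the limit of C
  have hHeq : ∑' r, -(pbar r) * Real.log (pbar r) = ∑' r, pbar r * g r :=
    tsum_congr fun r => by simp only [hgdef]; ring
  have hsum_t' : ∀ t, Summable fun r => p t r * g r := by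
    intro t
    refine (hsum_t t).congr fun r => ?_
    rw [Real.norm_of_nonneg (hg0 r)]
  have hCtend : Tendsto C atTop (𝓝 (∑' r, -(pbar r) * Real.log (pbar r))) := by
    have hlim : Tendsto C atTop (𝓝 ((1/(n:ℝ)) * ∑ t, ∑' r, p t r * g r)) := by
      exact (tendsto_finset_sum Finset.univ fun t _ => h2 t).const_mul _
    have heq2 : (1/(n:ℝ)) * ∑ t, ∑' r, p t r * g r = ∑' r, -(pbar r) * Real.log (pbar r) := by
      rw [hHeq, ← Summable.tsum_finsetSum (fun t _ => hsum_t' t), ← tsum_mul_left]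
      refine tsum_congr fun r => ?_
      rw [hpbar, mul_assoc, Finset.sum_mul]
    rw [heq2] at hlim
    exact hlim
  -- pointwise convergence of Phat
  have hqtend : ∀ r, Tendsto (fun m => Phat m ω r) atTop (𝓝 (pbar r)) := by
    intro r
    have : Tendsto (fun m => (1/(n:ℝ)) * ∑ t, Phat_t t m ω r) atTop
        (𝓝 ((1/(n:ℝ)) * ∑ t, p t r)) :=
      (tendsto_finset_sum Finset.univ fun t _ => h1 t r).const_mul _
    rw [← hpbar] at this
    refine this.congr fun m => (hPhat m ω r).symm
  -- positivity transfer
  have hqpos_imp : ∀ m r, 0 < Phat m ω r → 0 < pbar r := by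
    intro m r hq
    rcases (hpbar0 r).lt_or_eq with h | h
    · exact h
    · exfalso
      have : Phat m ω r = 0 := by
        refine hFsupp m r fun t ht => ?_
        rcases Finset.mem_image.mp ht with ⟨k, hk, hkr⟩
        exact h3 r h.symm t k hkr
      rw [this] at hq; exact lt_irrefl _ hq
  -- Gibbs' inequality, pointwise
  have gibbs : ∀ m r, -(Phat m ω r) * Real.log (Phat m ω r)
      ≤ Phat m ω r * g r + (pbar r - Phat m ω r) := by
    intro m r
    rcases (hq0m m r).lt_or_eq with hq | hq
    · have hpb : 0 < pbar r := hqpos_imp m r hq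
      have hlog := Real.log_le_sub_one_of_pos (div_pos hpb hq)
      rw [Real.log_div hpb.ne' hq.ne'] at hlog
      have h2' : Phat m ω r * (Real.log (pbar r) - Real.log (Phat m ω r))
          ≤ Phat m ω r * (pbar r / Phat m ω r - 1) :=
        mul_le_mul_of_nonneg_left hlog hq.le
      have h3' : Phat m ω r * (pbar r / Phat m ω r - 1) = pbar r - Phat m ω r := by
        field_simp
      rw [h3'] at h2'
      simp only [hgdef]
      nlinarith [h2']
    · rw [← hq]
      simpa using hpbar0 r
  -- nonnegativity of the entropy summands
  have hf0 : ∀ x : ℝ, 0 ≤ x → x ≤ 1 → 0 ≤ -x * Real.log x := by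
    intro x h0 h1'
    nlinarith [mul_nonneg h0 (neg_nonneg.mpr (Real.log_nonpos h0 h1'))]
  set u : ℕ → ℝ := fun m => ∑' r, -(Phat m ω r) * Real.log (Phat m ω r) with hudef
  have u_nonneg : ∀ m, 0 ≤ u m :=
    fun m => tsum_nonneg fun r => hf0 _ (hq0m m r) (hq1m m r)
  -- the upper bound
  have step : ∀ m : ℕ, 1 ≤ m → u m ≤ C m := by
    intro m hm
    have hS2 : Summable fun r => pbar r - Phat m ω r := hpbar_sum.summable.sub (Sq m)
    calc u m ≤ ∑' r, (Phat m ω r * g r + (pbar r - Phat m ω r)) :=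
          Summable.tsum_le_tsum (fun r => gibbs m r) (Sent m) ((Sqg m).add hS2)
      _ = (∑' r, Phat m ω r * g r) + ∑' r, (pbar r - Phat m ω r) :=
          Summable.tsum_add (Sqg m) hS2
      _ = C m + (1 - 1) := by
          rw [claim1, Summable.tsum_sub hpbar_sum.summable (Sq m), hpbar_sum.tsum_eq, claim2 m hm]
      _ = C m := by ring
  have hub : ∀ᶠ m in atTop, u m ≤ C m := eventually_atTop.mpr ⟨1, step⟩
  have hbdd_below : IsBoundedUnder (· ≥ ·) atTop u :=
    isBoundedUnder_of ⟨0, fun m => u_nonneg m⟩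
  have hbdd_above : IsBoundedUnder (· ≤ ·) atTop u :=
    (hCtend.isBoundedUnder_le).mono_le hub
  have hsuple : limsup u atTop ≤ ∑' r, -(pbar r) * Real.log (pbar r) := by
    calc limsup u atTop ≤ limsup C atTop :=
          limsup_le_limsup hub (hbdd_below.isCoboundedUnder_le) (hCtend.isBoundedUnder_le)
      _ = ∑' r, -(pbar r) * Real.log (pbar r) := hCtend.limsup_eq
  have hHsum' : Summable (fun r => -(pbar r) * Real.log (pbar r)) :=
    hsumH.congr fun r => by simp only [hgdef]; ring
  have hc : Continuous (fun x : ℝ => -x * Real.log x) := by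
    have := Real.continuous_mul_log.neg
    exact this.congr fun x => by simp [neg_mul]
  have hinf : ∑' r, -(pbar r) * Real.log (pbar r) ≤ liminf u atTop := by
    refine Summable.tsum_le_of_sum_le hHsum' fun s => ?_
    have hts : Tendsto (fun m => ∑ r ∈ s, -(Phat m ω r) * Real.log (Phat m ω r)) atTop
        (𝓝 (∑ r ∈ s, -(pbar r) * Real.log (pbar r))) := by
      refine tendsto_finset_sum s fun r _ => ?_
      exact ((hc.tendsto _).comp (hqtend r))
    have hle : ∀ m, ∑ r ∈ s, -(Phat m ω r) * Real.log (Phat m ω r) ≤ u m :=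
      fun m => Summable.sum_le_tsum s (fun r _ => hf0 _ (hq0m m r) (hq1m m r)) (Sent m)
    calc ∑ r ∈ s, -(pbar r) * Real.log (pbar r)
        = liminf (fun m => ∑ r ∈ s, -(Phat m ω r) * Real.log (Phat m ω r)) atTop :=
          hts.liminf_eq.symm
      _ ≤ liminf u atTop :=
          liminf_le_liminf (Eventually.of_forall hle)
            (hts.isBoundedUnder_ge) (hbdd_above.isCoboundedUnder_ge)
  exact tendsto_of_le_liminf_of_limsup_le hinf hsuple hbdd_above hbdd_below
end

section
/- In the setting of the Theorem — (Ω, F, P) a probability space, n ≥ 1, probability mass functions p_1, …, p_n on ℕ with H(p_t) < ∞, for each t an i.i.d. sequence R_t^1, R_t^2, … : Ω → ℕ with common law p_t, p̄ = (1/n) Σ_t p_t, empirical distributions P̂_t^m(r) = (1/m) #{k ≤ m : R_t^k = r} and P̂^m = (1/n) Σ_t P̂_t^m — the following holds for each fixed t with probability 1: lim_{m→∞} Σ_r −P̂_t^m(r) log P̂^m(r) = Σ_r −p_t(r) log p̄(r). -/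
open MeasureTheory ProbabilityTheory Filter Real

-- x * log (a / x) ≤ a / e for 0 < x, 0 < a
lemma xloga {a x : ℝ} (hx : 0 < x) (ha : 0 < a) :
    x * log (a / x) ≤ a / Real.exp 1 := by
  have he : (0:ℝ) < Real.exp 1 := Real.exp_pos 1
  have hkey : a / x = (a / (Real.exp 1 * x)) * Real.exp 1 := by field_simp
  have h1 : log (a / x) = log (a / (Real.exp 1 * x)) + 1 := by
    rw [hkey, Real.log_mul (by positivity) he.ne', Real.log_exp]
  have h2 : log (a / (Real.exp 1 * x)) ≤ a / (Real.exp 1 * x) - 1 :=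
    Real.log_le_sub_one_of_pos (by positivity)
  have := mul_le_mul_of_nonneg_left h2 hx.le
  calc x * log (a / x) = x * log (a / (Real.exp 1 * x)) + x := by rw [h1]; ring
    _ ≤ x * (a / (Real.exp 1 * x) - 1) + x := by linarith
    _ = a / Real.exp 1 := by field_simp; ring

lemma maxmin (a b : ℝ) : max (a - b) 0 + min (-a) (-b) = -b := by
  rcases le_total a b with h | h
  · rw [max_eq_right (by linarith), min_eq_right (by linarith)]; ring
  · rw [max_eq_left (by linarith), min_eq_left (by linarith)]; ring

lemma det_lemma (n : ℕ) (p pb : ℕ → ℝ) (q Q : ℕ → ℕ → ℝ)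
    (hpb0 : ∀ r, 0 ≤ pb r) (hpb1 : ∀ r, pb r ≤ 1)
    (hq0 : ∀ m r, 0 ≤ q m r) (hQ0 : ∀ m r, 0 ≤ Q m r) (hQ1 : ∀ m r, Q m r ≤ 1)
    (hQq : ∀ m r, q m r ≤ n * Q m r)
    (hfin : ∀ m, ∃ s : Finset ℕ, ∀ r ∉ s, q m r = 0)
    (hzero : ∀ m r, pb r = 0 → q m r = 0)
    (hqlim : ∀ r, Tendsto (fun m => q m r) atTop (nhds (p r)))
    (hQlim : ∀ r, Tendsto (fun m => Q m r) atTop (nhds (pb r)))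
    (hpbsum : Summable pb)
    (hsum : Summable (fun r => p r * (-log (pb r))))
    (hB : Tendsto (fun m => ∑' r, q m r * (-log (pb r))) atTop
      (nhds (∑' r, p r * (-log (pb r))))) :
    Tendsto (fun m => ∑' r, -(q m r) * log (Q m r)) atTop
      (nhds (∑' r, -(p r) * log (pb r))) := by
  classical
  set P : ℕ → ℕ → ℝ := fun m r => q m r * max (log (pb r) - log (Q m r)) 0 with hP
  set S : ℕ → ℕ → ℝ := fun m r => q m r * min (-log (pb r)) (-log (Q m r)) with hS
  have hdecomp : ∀ m r, -(q m r) * log (Q m r) = P m r + S m r := by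
    intro m r
    have := maxmin (log (pb r)) (log (Q m r))
    simp only [hP, hS]
    rw [← mul_add, this]
    ring
  -- p r = 0 when pb r = 0
  have hp_zero : ∀ r, pb r = 0 → p r = 0 := by
    intro r h
    have : Tendsto (fun m => q m r) atTop (nhds 0) := by
      simpa [hzero _ r h] using tendsto_const_nhds (α := ℝ) (f := atTop (α := ℕ))
    exact tendsto_nhds_unique (hqlim r) this
  -- nonneg facts
  have hlogpb : ∀ r, 0 ≤ -log (pb r) := fun r => neg_nonneg.2 (Real.log_nonpos (hpb0 r) (hpb1 r))
  have hlogQ : ∀ m r, 0 ≤ -log (Q m r) := fun m r => neg_nonneg.2 (Real.log_nonpos (hQ0 m r) (hQ1 m r))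
  have hS0 : ∀ m r, 0 ≤ S m r := fun m r =>
    mul_nonneg (hq0 m r) (le_min (hlogpb r) (hlogQ m r))
  have hP0 : ∀ m r, 0 ≤ P m r := fun m r => mul_nonneg (hq0 m r) (le_max_right _ _)
  -- P bound
  have hPbound : ∀ m r, P m r ≤ (n * pb r) / Real.exp 1 := by
    intro m r
    have hnpb : (0:ℝ) ≤ (n * pb r) / Real.exp 1 :=
      div_nonneg (mul_nonneg (Nat.cast_nonneg n) (hpb0 r)) (Real.exp_pos 1).le
    by_cases hq : q m r = 0
    · simpa [hP, hq] using hnpb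
    have hqpos : 0 < q m r := (hq0 m r).lt_of_ne (Ne.symm hq)
    have hQpos : 0 < Q m r := by
      rcases (hQ0 m r).lt_or_eq with h | h
      · exact h
      · exfalso; have h2 := hQq m r; rw [← h, mul_zero] at h2; linarith
    have hpbpos : 0 < pb r := by
      rcases (hpb0 r).lt_or_eq with h | h
      · exact h
      · exact absurd (hzero m r h.symm) hq
    rcases le_total (log (pb r)) (log (Q m r)) with h | h
    · simp only [hP]
      rw [max_eq_right (by linarith), mul_zero]
      exact hnpb
    · simp only [hP]
      rw [max_eq_left (by linarith)]
      have h1 : q m r * (log (pb r) - log (Q m r)) ≤ (n * Q m r) * (log (pb r) - log (Q m r)) :=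
        mul_le_mul_of_nonneg_right (hQq m r) (by linarith)
      have h2 : Q m r * (log (pb r) - log (Q m r)) ≤ pb r / Real.exp 1 := by
        have := xloga hQpos hpbpos
        rwa [Real.log_div hpbpos.ne' hQpos.ne'] at this
      calc q m r * (log (pb r) - log (Q m r)) ≤ (n:ℝ) * (Q m r * (log (pb r) - log (Q m r))) := by
            rw [← mul_assoc]; exact h1
        _ ≤ (n:ℝ) * (pb r / Real.exp 1) := by
            apply mul_le_mul_of_nonneg_left h2 (by positivity)
        _ = (n * pb r) / Real.exp 1 := by ring
  -- summabilities per m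
  have hsummq : ∀ m (f : ℕ → ℝ), (∀ r, q m r = 0 → f r = 0) → Summable f := by
    intro m f hf
    obtain ⟨s, hs⟩ := hfin m
    exact summable_of_ne_finset_zero (s := s) (fun r hr => hf r (hs r hr))
  have hsummP : ∀ m, Summable (P m) := fun m => hsummq m _ (fun r h => by simp [hP, h])
  have hsummS : ∀ m, Summable (S m) := fun m => hsummq m _ (fun r h => by simp [hS, h])
  have hsummg : ∀ m, Summable (fun r => q m r * (-log (pb r))) :=
    fun m => hsummq m _ (fun r h => by simp [h])
  -- P tsum → 0
  have hPlim : Tendsto (fun m => ∑' r, P m r) atTop (nhds 0) := by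
    have h0 : (0:ℝ) = ∑' r : ℕ, (0:ℝ) := by simp
    rw [h0]
    apply tendsto_tsum_of_dominated_convergence
      (bound := fun r => (n * pb r) / Real.exp 1)
    · apply Summable.div_const
      exact (hpbsum.mul_left _)
    · intro r
      by_cases hpb : pb r = 0
      · have : ∀ m, P m r = 0 := fun m => by simp [hP, hzero m r hpb]
        simpa [this] using tendsto_const_nhds (α := ℝ) (f := atTop (α := ℕ))
      · have hpbpos : 0 < pb r := (hpb0 r).lt_of_ne (Ne.symm hpb)
        have hlog : Tendsto (fun m => log (Q m r)) atTop (nhds (log (pb r))) :=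
          ((Real.continuousAt_log hpbpos.ne').tendsto).comp (hQlim r)
        have : Tendsto (fun m => max (log (pb r) - log (Q m r)) 0) atTop (nhds 0) := by
          have h' := (tendsto_const_nhds (x := log (pb r)) (f := atTop (α := ℕ))).sub hlog
          rw [sub_self] at h'
          simpa using h'.max (tendsto_const_nhds (x := (0:ℝ)))
        simpa [hP] using (hqlim r).mul this
    · filter_upwards with m r
      rw [Real.norm_of_nonneg (hP0 m r)]
      exact hPbound m r
  -- S tsum → L
  set L := ∑' r, p r * (-log (pb r)) with hL
  have hSlim_pt : ∀ r, Tendsto (fun m => S m r) atTop (nhds (p r * (-log (pb r)))) := by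
    intro r
    by_cases hpb : pb r = 0
    · have h1 : ∀ m, S m r = 0 := by
        intro m; simp [hS, hzero m r hpb]
      rw [hp_zero r hpb]
      simpa [h1] using tendsto_const_nhds (α := ℝ) (f := atTop (α := ℕ))
    · have hpbpos : 0 < pb r := (hpb0 r).lt_of_ne (Ne.symm hpb)
      have hlog : Tendsto (fun m => log (Q m r)) atTop (nhds (log (pb r))) :=
        ((Real.continuousAt_log hpbpos.ne').tendsto).comp (hQlim r)
      have hmin : Tendsto (fun m => min (-log (pb r)) (-log (Q m r))) atTop
          (nhds (-log (pb r))) := by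
        have := (tendsto_const_nhds (x := -log (pb r)) (f := atTop (α := ℕ))).min hlog.neg
        simpa using this
      simpa [hS] using (hqlim r).mul hmin
  have hSle : ∀ m, ∑' r, S m r ≤ ∑' r, q m r * (-log (pb r)) := by
    intro m
    apply Summable.tsum_le_tsum _ (hsummS m) (hsummg m)
    intro r
    exact mul_le_mul_of_nonneg_left (min_le_left _ _) (hq0 m r)
  have hSlim : Tendsto (fun m => ∑' r, S m r) atTop (nhds L) := by
    rw [tendsto_order]
    constructor
    · intro a ha
      -- find N with partial sum > a
      have hpart : Tendsto (fun N => ∑ r ∈ Finset.range N, p r * (-log (pb r))) atTop (nhds L) :=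
        hsum.hasSum.tendsto_sum_nat
      obtain ⟨N, hN⟩ := (hpart.eventually (eventually_gt_nhds ha)).exists
      have hfs : Tendsto (fun m => ∑ r ∈ Finset.range N, S m r) atTop
          (nhds (∑ r ∈ Finset.range N, p r * (-log (pb r)))) :=
        tendsto_finset_sum _ (fun r _ => hSlim_pt r)
      filter_upwards [hfs.eventually (eventually_gt_nhds hN)] with m hm
      calc a < ∑ r ∈ Finset.range N, S m r := hm
        _ ≤ ∑' r, S m r := Summable.sum_le_tsum _ (fun r _ => hS0 m r) (hsummS m)
    · intro a ha
      filter_upwards [hB.eventually (eventually_lt_nhds ha)] with m hm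
      exact lt_of_le_of_lt (hSle m) hm
  -- combine
  have htotal : ∀ m, ∑' r, -(q m r) * log (Q m r) = (∑' r, P m r) + ∑' r, S m r := by
    intro m
    rw [← Summable.tsum_add (hsummP m) (hsummS m)]
    exact tsum_congr (fun r => hdecomp m r)
  have htarget : ∑' r, -(p r) * log (pb r) = L := by
    rw [hL]; exact tsum_congr (fun r => by ring)
  rw [htarget]
  have := hPlim.add hSlim
  rw [zero_add] at this
  exact Tendsto.congr (fun m => (htotal m).symm) this

/-- Key intermediate convergence in the proof of the Theorem: for each fixed `t`,
the empirical cross-entropy `∑ r, -P̂ₜᵐ(r) log P̂ᵐ(r)` converges almost surely to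
the cross-entropy `∑ r, -pₜ(r) log p̄(r)`. -/
theorem plugin_cross_entropy_converges
    {Ω : Type*} [MeasurableSpace Ω] (μ : Measure Ω) [IsProbabilityMeasure μ]
    (n : ℕ) (hn : 1 ≤ n) (p : Fin n → ℕ → ℝ)
    (hp0 : ∀ t r, 0 ≤ p t r) (hp1 : ∀ t, HasSum (p t) 1)
    (hH : ∀ t, Summable (fun r => -(p t r) * log (p t r)))
    (R : Fin n → ℕ → Ω → ℕ) (hmeas : ∀ t k, Measurable (R t k))
    (hindep : ∀ t, iIndepFun (R t) μ)
    (hlaw : ∀ t k r, μ {ω | R t k ω = r} = ENNReal.ofReal (p t r))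
    (pbar : ℕ → ℝ) (hpbar : ∀ r, pbar r = (1 / n) * ∑ t, p t r)
    (Phat_t : Fin n → ℕ → Ω → ℕ → ℝ)
    (hPhat_t : ∀ t m ω r,
      Phat_t t m ω r = (((Finset.range m).filter (fun k => R t k ω = r)).card : ℝ) / m)
    (Phat : ℕ → Ω → ℕ → ℝ)
    (hPhat : ∀ m ω r, Phat m ω r = (1 / n) * ∑ t, Phat_t t m ω r) :
    ∀ t, ∀ᵐ ω ∂μ, Tendsto (fun m => ∑' r, -(Phat_t t m ω r) * log (Phat m ω r))
      atTop (nhds (∑' r, -(p t r) * log (pbar r))) := by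
  intro t
  classical
  have hnR : (0:ℝ) < n := by exact_mod_cast hn
  have hple1 : ∀ t' r, p t' r ≤ 1 := fun t' r =>
    le_hasSum (hp1 t') r (fun r' _ => hp0 t' r')
  have hpbar0 : ∀ r, 0 ≤ pbar r := by
    intro r; rw [hpbar r]
    exact mul_nonneg (by positivity) (Finset.sum_nonneg fun t' _ => hp0 t' r)
  have hpbar1 : ∀ r, pbar r ≤ 1 := by
    intro r; rw [hpbar r]
    have h : ∑ t', p t' r ≤ ∑ _t' : Fin n, (1:ℝ) :=
      Finset.sum_le_sum fun t' _ => hple1 t' r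
    simp only [Finset.sum_const, Finset.card_univ, Fintype.card_fin, nsmul_eq_mul,
      mul_one] at h
    calc (1/n : ℝ) * ∑ t', p t' r ≤ (1/n : ℝ) * n :=
          mul_le_mul_of_nonneg_left h (by positivity)
      _ = 1 := by field_simp
  have hpbar_zero : ∀ r, pbar r = 0 → ∀ t', p t' r = 0 := by
    intro r h t'
    rw [hpbar r] at h
    have h2 : ∑ t', p t' r = 0 := by
      have hne : (1/(n:ℝ)) ≠ 0 := by positivity
      rcases mul_eq_zero.mp h with h' | h'
      · exact absurd h' hne
      · exact h'
    exact (Finset.sum_eq_zero_iff_of_nonneg (fun t' _ => hp0 t' r)).mp h2 t'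
      (Finset.mem_univ _)
  set c : ℕ → ℝ := fun r => -log (pbar r) with hc
  have hc0 : ∀ r, 0 ≤ c r := fun r =>
    neg_nonneg.2 (Real.log_nonpos (hpbar0 r) (hpbar1 r))
  have hcm : Measurable c := measurable_of_countable c
  have hpbsum : Summable pbar := by
    have h : Summable (fun r => ∑ t', p t' r) :=
      summable_sum (fun t' _ => (hp1 t').summable)
    exact (h.mul_left _).congr (fun r => (hpbar r).symm)
  have hple_npbar : ∀ r, p t r ≤ n * pbar r := by
    intro r
    rw [hpbar r, ← mul_assoc, mul_one_div, div_self (ne_of_gt hnR), one_mul]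
    exact Finset.single_le_sum (fun t' _ => hp0 t' r) (Finset.mem_univ t)
  have hsum : Summable (fun r => p t r * c r) := by
    have hb : ∀ r, p t r * c r ≤ -(p t r) * log (p t r) + p t r * Real.log n := by
      intro r
      rcases (hp0 t r).lt_or_eq with h | h
      · have hpb : 0 < pbar r := by
          by_contra h'
          push_neg at h'
          have := hpbar_zero r (le_antisymm h' (hpbar0 r)) t
          linarith
        have h1 : p t r / n ≤ pbar r := by
          rw [div_le_iff₀ hnR]
          calc p t r ≤ n * pbar r := hple_npbar r
            _ = pbar r * n := mul_comm _ _
        have h2 : c r ≤ -log (p t r / n) := by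
          simp only [hc, neg_le_neg_iff]
          exact Real.log_le_log (by positivity) h1
        have h3 : -log (p t r / n) = -log (p t r) + Real.log n := by
          rw [Real.log_div (ne_of_gt h) (ne_of_gt hnR)]; ring
        calc p t r * c r ≤ p t r * (-log (p t r) + Real.log n) := by
              rw [← h3]; exact mul_le_mul_of_nonneg_left (h3 ▸ h2) (hp0 t r)
          _ = -(p t r) * log (p t r) + p t r * Real.log n := by ring
      · rw [← h]; simp
    exact Summable.of_nonneg_of_le (fun r => mul_nonneg (hp0 t r) (hc0 r)) hb
      ((hH t).add (((hp1 t).summable).mul_right (Real.log n)))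
  -- law on preimages
  have hlaw' : ∀ t' k r, μ ((R t' k) ⁻¹' {r}) = ENNReal.ofReal (p t' r) := by
    intro t' k r
    have : (R t' k) ⁻¹' {r} = {ω | R t' k ω = r} := by
      ext ω; simp
    rw [this, hlaw]
  have hmap : ∀ t' k, Measure.map (R t' k) μ = Measure.map (R t' 0) μ := by
    intro t' k
    apply Measure.ext_of_singleton
    intro r
    rw [Measure.map_apply (hmeas t' k) (measurableSet_singleton r),
      Measure.map_apply (hmeas t' 0) (measurableSet_singleton r), hlaw', hlaw']
  have hident : ∀ t' k, IdentDistrib (R t' k) (R t' 0) μ μ := fun t' k =>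
    ⟨(hmeas t' k).aemeasurable, (hmeas t' 0).aemeasurable, hmap t' k⟩
  -- E1
  have E1 : ∀ (t' : Fin n) (r : ℕ), ∀ᵐ ω ∂μ,
      Tendsto (fun m => Phat_t t' m ω r) atTop (nhds (p t' r)) := by
    intro t' r
    set φ : ℕ → ℝ := fun x => if x = r then (1:ℝ) else 0 with hφ
    have hmφ : Measurable φ := measurable_of_countable φ
    set X : ℕ → Ω → ℝ := fun k => φ ∘ (R t' k) with hX
    have hs : MeasurableSet ((R t' 0) ⁻¹' {r}) := (hmeas t' 0) (measurableSet_singleton r)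
    have hXind : X 0 = Set.indicator ((R t' 0) ⁻¹' {r}) (fun _ => (1:ℝ)) := by
      funext ω
      simp [hX, hφ, Set.indicator_apply, Set.mem_preimage, Function.comp]
    have hint : Integrable (X 0) μ := by
      rw [hXind]; exact (integrable_const (1:ℝ)).indicator hs
    have hindepX : Pairwise (Function.onFun (IndepFun · · μ) X) := fun i j hij =>
      ((hindep t').indepFun hij).comp hmφ hmφ
    have hidentX : ∀ k, IdentDistrib (X k) (X 0) μ μ := fun k => (hident t' k).comp hmφ
    have hE : μ[X 0] = p t' r := by
      rw [hXind]
      rw [integral_indicator_const (1:ℝ) hs, measureReal_def, hlaw' t' 0 r, smul_eq_mul, mul_one,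
        ENNReal.toReal_ofReal (hp0 t' r)]
    have hslln := strong_law_ae X hint hindepX hidentX
    rw [hE] at hslln
    filter_upwards [hslln] with ω hω
    apply hω.congr
    intro m
    rw [hPhat_t]
    have hsum' : ∑ k ∈ Finset.range m, X k ω
        = (((Finset.range m).filter (fun k => R t' k ω = r)).card : ℝ) := by
      rw [← Finset.sum_boole]
      apply Finset.sum_congr rfl
      intro k _
      simp [hX, hφ, Function.comp]
    rw [smul_eq_mul, hsum', inv_mul_eq_div]
  -- E2
  have hYint : Integrable (fun ω => c (R t 0 ω)) μ := by
    constructor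
    · exact (hcm.comp (hmeas t 0)).aestronglyMeasurable
    · rw [hasFiniteIntegral_def]
      have h1 : ∫⁻ ω, ‖c (R t 0 ω)‖ₑ ∂μ
          = ∫⁻ x, ‖c x‖ₑ ∂(Measure.map (R t 0) μ) :=
        (lintegral_map (measurable_of_countable (fun x : ℕ => (‖c x‖ₑ : ENNReal)))
          (hmeas t 0)).symm
      rw [h1, lintegral_countable']
      have h2 : ∀ r : ℕ, (‖c r‖ₑ : ENNReal) * (Measure.map (R t 0) μ) {r}
          = ENNReal.ofReal (p t r * c r) := by
        intro r
        rw [Measure.map_apply (hmeas t 0) (measurableSet_singleton r), hlaw',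
          Real.enorm_eq_ofReal (hc0 r), ← ENNReal.ofReal_mul (hc0 r), mul_comm]
      rw [tsum_congr h2, ← ENNReal.ofReal_tsum_of_nonneg
        (fun r => mul_nonneg (hp0 t r) (hc0 r)) hsum]
      exact ENNReal.ofReal_lt_top
  have hYmap : Integrable c (Measure.map (R t 0) μ) :=
    (integrable_map_measure (hcm.aestronglyMeasurable) (hmeas t 0).aemeasurable).mpr hYint
  have hEY : μ[fun ω => c (R t 0 ω)] = ∑' r, p t r * c r := by
    rw [← integral_map (hmeas t 0).aemeasurable hcm.aestronglyMeasurable,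
      integral_countable' hYmap]
    apply tsum_congr
    intro r
    rw [measureReal_def, Measure.map_apply (hmeas t 0) (measurableSet_singleton r), hlaw',
      ENNReal.toReal_ofReal (hp0 t r), smul_eq_mul]
  have E2 : ∀ᵐ ω ∂μ, Tendsto (fun (m : ℕ) => (m:ℝ)⁻¹ * ∑ k ∈ Finset.range m, c (R t k ω))
      atTop (nhds (∑' r, p t r * c r)) := by
    have hindepY : Pairwise (Function.onFun (IndepFun · · μ) (fun k => c ∘ (R t k))) := fun i j hij =>
      ((hindep t).indepFun hij).comp hcm hcm
    have hidentY : ∀ k, IdentDistrib (c ∘ (R t k)) (c ∘ (R t 0)) μ μ := fun k =>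
      (hident t k).comp hcm
    have hslln := strong_law_ae (fun k => c ∘ (R t k)) hYint hindepY hidentY
    rw [show μ[c ∘ (R t 0)] = ∑' r, p t r * c r from hEY] at hslln
    filter_upwards [hslln] with ω hω
    simpa [smul_eq_mul, Function.comp] using hω
  -- E3
  have E3 : ∀ᵐ ω ∂μ, ∀ (t' : Fin n) (k r : ℕ), pbar r = 0 → R t' k ω ≠ r := by
    rw [ae_all_iff]; intro t'
    rw [ae_all_iff]; intro k
    rw [ae_all_iff]; intro r
    by_cases h : pbar r = 0
    · have hz : μ {ω | R t' k ω = r} = 0 := by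
        rw [hlaw, hpbar_zero r h t']; simp
      have h2 : ∀ᵐ ω ∂μ, R t' k ω ≠ r := by
        rw [ae_iff]
        simpa [not_not] using hz
      filter_upwards [h2] with ω hω _
      exact hω
    · filter_upwards with ω h'
      exact absurd h' h
  have E1all : ∀ᵐ ω ∂μ, ∀ (t' : Fin n) (r : ℕ),
      Tendsto (fun m => Phat_t t' m ω r) atTop (nhds (p t' r)) := by
    rw [ae_all_iff]; intro t'
    rw [ae_all_iff]; intro r
    exact E1 t' r
  filter_upwards [E1all, E2, E3] with ω h1 h2 h3
  -- basic bounds on empirical quantities for this ω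
  have hq0 : ∀ m r, 0 ≤ Phat_t t m ω r := by
    intro m r; rw [hPhat_t]; positivity
  have hqt0 : ∀ t' m r, 0 ≤ Phat_t t' m ω r := by
    intro t' m r; rw [hPhat_t]; positivity
  have hqt1 : ∀ t' m r, Phat_t t' m ω r ≤ 1 := by
    intro t' m r
    rw [hPhat_t]
    rcases Nat.eq_zero_or_pos m with h | h
    · simp [h]
    · rw [div_le_one (by exact_mod_cast h)]
      exact_mod_cast (Finset.card_filter_le _ _).trans (by simp)
  have hQ0 : ∀ m r, 0 ≤ Phat m ω r := by
    intro m r; rw [hPhat]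
    exact mul_nonneg (by positivity) (Finset.sum_nonneg fun t' _ => hqt0 t' m r)
  have hQ1 : ∀ m r, Phat m ω r ≤ 1 := by
    intro m r; rw [hPhat]
    have h : ∑ t', Phat_t t' m ω r ≤ ∑ _t' : Fin n, (1:ℝ) :=
      Finset.sum_le_sum fun t' _ => hqt1 t' m r
    simp only [Finset.sum_const, Finset.card_univ, Fintype.card_fin, nsmul_eq_mul,
      mul_one] at h
    calc (1/n : ℝ) * ∑ t', Phat_t t' m ω r ≤ (1/n : ℝ) * n :=
          mul_le_mul_of_nonneg_left h (by positivity)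
      _ = 1 := by field_simp
  have hQq : ∀ m r, Phat_t t m ω r ≤ n * Phat m ω r := by
    intro m r
    rw [hPhat, ← mul_assoc, mul_one_div, div_self (ne_of_gt hnR), one_mul]
    exact Finset.single_le_sum (fun t' _ => hqt0 t' m r) (Finset.mem_univ t)
  have hfin : ∀ m, ∃ s : Finset ℕ, ∀ r ∉ s, Phat_t t m ω r = 0 := by
    intro m
    refine ⟨(Finset.range m).image (fun k => R t k ω), fun r hr => ?_⟩
    rw [hPhat_t]
    have : (Finset.range m).filter (fun k => R t k ω = r) = ∅ := by
      rw [Finset.filter_eq_empty_iff]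
      intro k hk h'
      exact hr (h' ▸ Finset.mem_image_of_mem (fun k => R t k ω) hk)
    simp [this]
  have hzero : ∀ m r, pbar r = 0 → Phat_t t m ω r = 0 := by
    intro m r h
    rw [hPhat_t]
    have : (Finset.range m).filter (fun k => R t k ω = r) = ∅ := by
      rw [Finset.filter_eq_empty_iff]
      intro k _
      exact h3 t k r h
    simp [this]
  have hQlim : ∀ r, Tendsto (fun m => Phat m ω r) atTop (nhds (pbar r)) := by
    intro r
    have h : Tendsto (fun m => (1/n : ℝ) * ∑ t', Phat_t t' m ω r) atTop
        (nhds ((1/n : ℝ) * ∑ t', p t' r)) :=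
      (tendsto_finset_sum _ (fun t' _ => h1 t' r)).const_mul _
    rw [← hpbar r] at h
    exact h.congr (fun m => (hPhat m ω r).symm)
  have hB : Tendsto (fun m => ∑' r, Phat_t t m ω r * c r) atTop
      (nhds (∑' r, p t r * c r)) := by
    have hEq : (fun (m : ℕ) => (m:ℝ)⁻¹ * ∑ k ∈ Finset.range m, c (R t k ω))
        =ᶠ[atTop] (fun m => ∑' r, Phat_t t m ω r * c r) := by
      filter_upwards [eventually_ge_atTop 1] with m hm
      set img := (Finset.range m).image (fun k => R t k ω) with himg
      have hnot : ∀ r ∉ img, Phat_t t m ω r * c r = 0 := by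
        intro r hr
        have : (Finset.range m).filter (fun k => R t k ω = r) = ∅ := by
          rw [Finset.filter_eq_empty_iff]
          intro k hk h'
          exact hr (h' ▸ Finset.mem_image_of_mem (fun k => R t k ω) hk)
        rw [hPhat_t, this]
        simp
      rw [tsum_eq_sum hnot]
      have key : ∑ r ∈ img, ∑ k ∈ (Finset.range m).filter (fun k => R t k ω = r), c r
          = ∑ k ∈ Finset.range m, c (R t k ω) :=
        Finset.sum_fiberwise_of_maps_to' (fun k hk => Finset.mem_image_of_mem _ hk) c
      rw [← key, Finset.mul_sum]
      apply Finset.sum_congr rfl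
      intro r _
      rw [Finset.sum_const, nsmul_eq_mul, hPhat_t]
      ring
    exact Tendsto.congr' hEq h2
  exact det_lemma n (p t) pbar (fun m r => Phat_t t m ω r) (fun m r => Phat m ω r)
    hpbar0 hpbar1 hq0 hQ0 hQ1 hQq hfin hzero (h1 t) hQlim hpbsum hsum hB
end

section
/- In the setting of the Theorem — (Ω, F, P) a probability space, n ≥ 1, probability mass functions p_1, …, p_n on ℕ with H(p_t) < ∞, for each t an i.i.d. sequence R_t^1, R_t^2, … : Ω → ℕ with common law p_t, p̄ = (1/n) Σ_t p_t, empirical distributions P̂_t^m(r) = (1/m) #{k ≤ m : R_t^k = r} and P̂^m = (1/n) Σ_t P̂_t^m — the following holds for each fixed t ∈ {1,…,n} with probability 1: lim_{m→∞} Σ_r P̂_t^m(r) log(P̂_t^m(r)/P̂^m(r)) = D(p_t ‖ p̄) = Σ_r p_t(r) log(p_t(r)/p̄(r)). -/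
open MeasureTheory ProbabilityTheory Filter Real Finset Topology

/-- SLLN for indicator frequencies of an iid ℕ-valued sequence. -/
lemma slln_freq {Ω : Type*} [MeasurableSpace Ω] (μ : Measure Ω) [IsProbabilityMeasure μ]
    (Y : ℕ → Ω → ℕ) (hmeas : ∀ k, Measurable (Y k))
    (hindep : iIndepFun Y μ)
    (p : ℕ → ℝ) (hp0 : ∀ r, 0 ≤ p r)
    (hlaw : ∀ k r, μ {ω | Y k ω = r} = ENNReal.ofReal (p r)) (r : ℕ) :
    ∀ᵐ ω ∂μ, Tendsto
      (fun m : ℕ => (((Finset.range m).filter (fun k => Y k ω = r)).card : ℝ) / m)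
      atTop (𝓝 (p r)) := by
  classical
  set f : ℕ → ℝ := fun x => if x = r then 1 else 0 with hf
  have hfm : Measurable f := measurable_of_countable f
  set X : ℕ → Ω → ℝ := fun k ω => f (Y k ω) with hX
  have hXmeas : ∀ k, Measurable (X k) := fun k => hfm.comp (hmeas k)
  have hXind : ∀ k ω, X k ω = ({ω' | Y k ω' = r}).indicator (fun _ => (1:ℝ)) ω := by
    intro k ω
    by_cases h : Y k ω = r <;> simp [hX, hf, h, Set.indicator_apply, Set.mem_setOf_eq]
  have hms : ∀ k, MeasurableSet {ω' | Y k ω' = r} := fun k =>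
    (hmeas k) (measurableSet_singleton r)
  have hint : Integrable (X 0) μ := by
    have : Integrable (({ω' | Y 0 ω' = r}).indicator (fun _ => (1:ℝ))) μ :=
      (integrable_const (1:ℝ)).indicator (hms 0)
    exact this.congr (Filter.Eventually.of_forall fun ω => (hXind 0 ω).symm)
  have hintegral : μ[X 0] = p r := by
    have : μ[X 0] = ∫ ω, ({ω' | Y 0 ω' = r}).indicator (fun _ => (1:ℝ)) ω ∂μ := by
      refine integral_congr_ae (Filter.Eventually.of_forall fun ω => hXind 0 ω)
    rw [this, integral_indicator_const _ (hms 0), measureReal_def, hlaw 0 r, smul_eq_mul, mul_one,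
      ENNReal.toReal_ofReal (hp0 r)]
  have hXindep : Pairwise (Function.onFun (IndepFun · · μ) X) := by
    intro i j hij
    exact (hindep.indepFun hij).comp hfm hfm
  have hident : ∀ k, IdentDistrib (X k) (X 0) μ μ := by
    intro k
    have hY : IdentDistrib (Y k) (Y 0) μ μ := by
      refine ⟨(hmeas k).aemeasurable, (hmeas 0).aemeasurable, ?_⟩
      rw [MeasureTheory.Measure.ext_iff_singleton]
      intro a
      rw [Measure.map_apply (hmeas k) (measurableSet_singleton a),
        Measure.map_apply (hmeas 0) (measurableSet_singleton a)]
      have h1 : Y k ⁻¹' {a} = {ω | Y k ω = a} := rfl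
      have h2 : Y 0 ⁻¹' {a} = {ω | Y 0 ω = a} := rfl
      rw [h1, h2, hlaw k a, hlaw 0 a]
    exact hY.comp hfm
  filter_upwards [strong_law_ae_real X hint hXindep hident] with ω hω
  have : ∀ m : ℕ, (∑ i ∈ range m, X i ω) =
      (((Finset.range m).filter (fun k => Y k ω = r)).card : ℝ) := by
    intro m
    simp [hX, hf, Finset.sum_boole]
  rw [hintegral] at hω
  exact hω.congr (fun m => by rw [this m])


lemma analytic_main (n : ℕ) (hn : 1 ≤ n) (p pbar d : ℕ → ℝ)
    (hd : ∀ r, d r = p r * log (p r / pbar r))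
    (hp1 : HasSum p 1) (hpbar1 : HasSum pbar 1)
    (hdsum : Summable d)
    (q qb : ℕ → ℕ → ℝ)
    (hq0 : ∀ m r, 0 ≤ q m r) (hqb0 : ∀ m r, 0 ≤ qb m r)
    (hqle : ∀ m r, q m r ≤ n * qb m r)
    (hq1 : ∀ m, 1 ≤ m → HasSum (q m) 1)
    (hqb1 : ∀ m, 1 ≤ m → HasSum (qb m) 1)
    (hfin : ∀ m, (Function.support (q m)).Finite)
    (hqbfin : ∀ m, (Function.support (qb m)).Finite)
    (hterm : ∀ r, Tendsto (fun m => q m r * log (q m r / qb m r)) atTop (𝓝 (d r)))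
    (hqtend : ∀ r, Tendsto (fun m => q m r) atTop (𝓝 (p r)))
    (hqbtend : ∀ r, Tendsto (fun m => qb m r) atTop (𝓝 (pbar r))) :
    Tendsto (fun m => ∑' r, q m r * log (q m r / qb m r)) atTop (𝓝 (∑' r, d r)) := by
  classical
  set F : ℕ → ℕ → ℝ := fun m r => q m r * log (q m r / qb m r) with hF
  have hn0 : (0:ℝ) < n := by exact_mod_cast hn
  have hlogn : 0 ≤ log n := Real.log_nonneg (by exact_mod_cast hn)
  -- support of F m is inside support of q m
  have hFsupp : ∀ m, Function.support (F m) ⊆ Function.support (q m) := by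
    intro m r hr
    simp only [Function.mem_support, hF] at hr ⊢
    intro h0; exact hr (by rw [h0, zero_mul])
  have hFsum : ∀ m, Summable (F m) := by
    intro m
    refine summable_of_ne_finset_zero (s := ((hfin m).subset (hFsupp m)).toFinset) ?_
    intro r hr
    simpa using (by simpa [Set.Finite.mem_toFinset] using hr : r ∉ Function.support (F m))
  have hqsum : ∀ m, Summable (q m) := by
    intro m
    refine summable_of_ne_finset_zero (s := (hfin m).toFinset) ?_
    intro r hr
    simpa using (by simpa [Set.Finite.mem_toFinset] using hr : r ∉ Function.support (q m))
  -- termwise bounds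
  have hub : ∀ m r, F m r ≤ q m r * log n := by
    intro m r
    rcases eq_or_lt_of_le (hq0 m r) with h | h
    · simp [hF, ← h, hlogn]
    · have hqb : 0 < qb m r := by
        by_contra hc
        push_neg at hc
        have h0 : qb m r = 0 := le_antisymm hc (hqb0 m r)
        nlinarith [hqle m r]
      have hdiv : q m r / qb m r ≤ n := (div_le_iff₀ hqb).2 (by linarith [hqle m r])
      have := Real.log_le_log (by positivity) hdiv
      exact mul_le_mul_of_nonneg_left this h.le
  have hlb : ∀ m r, q m r - qb m r ≤ F m r := by
    intro m r
    rcases eq_or_lt_of_le (hq0 m r) with h | h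
    · simp [hF, ← h, hqb0 m r]
    · have hqb : 0 < qb m r := by
        by_contra hc
        push_neg at hc
        have h0 : qb m r = 0 := le_antisymm hc (hqb0 m r)
        nlinarith [hqle m r]
      have hlog : 1 - qb m r / q m r ≤ log (q m r / qb m r) := by
        have := Real.log_le_sub_one_of_pos (show 0 < qb m r / q m r by positivity)
        have hinv : log (qb m r / q m r) = - log (q m r / qb m r) := by
          rw [← Real.log_inv, inv_div]
        nlinarith [this, hinv]
      calc q m r - qb m r = q m r * (1 - qb m r / q m r) := by
            field_simp
          _ ≤ q m r * log (q m r / qb m r) := mul_le_mul_of_nonneg_left hlog h.le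
          _ = F m r := rfl
  -- splitting identities
  have hsplitF : ∀ m N, (∑ r ∈ range N, F m r) + ∑' r, F m (r + N) = ∑' r, F m r :=
    fun m N => Summable.sum_add_tsum_nat_add N (hFsum m)
  have hsplitq : ∀ m N, 1 ≤ m → (∑' r, q m (r + N)) = 1 - ∑ r ∈ range N, q m r := by
    intro m N hm
    have := Summable.sum_add_tsum_nat_add N (hqsum m)
    rw [(hq1 m hm).tsum_eq] at this
    linarith
  have hqbsum : ∀ m, Summable (qb m) := by
    intro m
    refine summable_of_ne_finset_zero (s := (hqbfin m).toFinset) ?_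
    intro r hr
    simpa using (by simpa [Set.Finite.mem_toFinset] using hr : r ∉ Function.support (qb m))
  have hsplitqb : ∀ m N, 1 ≤ m → (∑' r, qb m (r + N)) = 1 - ∑ r ∈ range N, qb m r := by
    intro m N hm
    have := Summable.sum_add_tsum_nat_add N (hqbsum m)
    rw [(hqb1 m hm).tsum_eq] at this
    linarith
  -- the key two-sided bound for the tail
  have key_ub : ∀ N m, 1 ≤ m →
      (∑' r, F m r) ≤ (∑ r ∈ range N, F m r) + (1 - ∑ r ∈ range N, q m r) * log n := by
    intro N m hm
    rw [← hsplitF m N]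
    have h1 : (∑' r, F m (r + N)) ≤ ∑' r, q m (r + N) * log n := by
      refine Summable.tsum_le_tsum (fun r => hub m (r + N)) ?_ ?_
      · exact (summable_nat_add_iff N).2 (hFsum m)
      · exact ((summable_nat_add_iff N).2 (hqsum m)).mul_right _
    have h2 : (∑' r, q m (r + N) * log n) = (1 - ∑ r ∈ range N, q m r) * log n := by
      rw [tsum_mul_right, hsplitq m N hm]
    linarith
  have key_lb : ∀ N m, 1 ≤ m →
      (∑ r ∈ range N, F m r) + ((∑ r ∈ range N, qb m r) - ∑ r ∈ range N, q m r)
        ≤ ∑' r, F m r := by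
    intro N m hm
    rw [← hsplitF m N]
    have h1 : (∑' r, (q m (r + N) - qb m (r + N))) ≤ ∑' r, F m (r + N) := by
      refine Summable.tsum_le_tsum (fun r => hlb m (r + N)) ?_ ?_
      · exact ((summable_nat_add_iff N).2 (hqsum m)).sub ((summable_nat_add_iff N).2 (hqbsum m))
      · exact (summable_nat_add_iff N).2 (hFsum m)
    have h2 : (∑' r, (q m (r + N) - qb m (r + N)))
        = (1 - ∑ r ∈ range N, q m r) - (1 - ∑ r ∈ range N, qb m r) := by
      rw [Summable.tsum_sub ((summable_nat_add_iff N).2 (hqsum m)) ((summable_nat_add_iff N).2 (hqbsum m)),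
        hsplitq m N hm, hsplitqb m N hm]
    linarith
  -- convergence of the N-indexed approximations
  have hdpart : Tendsto (fun N => ∑ r ∈ range N, d r) atTop (𝓝 (∑' r, d r)) :=
    hdsum.hasSum.tendsto_sum_nat
  have hppart : Tendsto (fun N => ∑ r ∈ range N, p r) atTop (𝓝 1) := hp1.tendsto_sum_nat
  have hpbpart : Tendsto (fun N => ∑ r ∈ range N, pbar r) atTop (𝓝 1) := hpbar1.tendsto_sum_nat
  -- m→∞ limits of the finite pieces, for fixed N
  have hFpart : ∀ N, Tendsto (fun m => ∑ r ∈ range N, F m r) atTop (𝓝 (∑ r ∈ range N, d r)) :=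
    fun N => tendsto_finset_sum _ (fun r _ => hterm r)
  have hqpart : ∀ N, Tendsto (fun m => ∑ r ∈ range N, q m r) atTop (𝓝 (∑ r ∈ range N, p r)) :=
    fun N => tendsto_finset_sum _ (fun r _ => hqtend r)
  have hqbpart : ∀ N, Tendsto (fun m => ∑ r ∈ range N, qb m r) atTop
      (𝓝 (∑ r ∈ range N, pbar r)) :=
    fun N => tendsto_finset_sum _ (fun r _ => hqbtend r)
  refine tendsto_order.2 ⟨?_, ?_⟩
  · -- lower: ∀ a < D, eventually a < D̂
    intro a ha
    have hNlim : Tendsto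
        (fun N => (∑ r ∈ range N, d r) + ((∑ r ∈ range N, pbar r) - ∑ r ∈ range N, p r))
        atTop (𝓝 (∑' r, d r)) := by
      have : Tendsto
          (fun N => (∑ r ∈ range N, d r) + ((∑ r ∈ range N, pbar r) - ∑ r ∈ range N, p r))
          atTop (𝓝 ((∑' r, d r) + (1 - 1))) := hdpart.add (hpbpart.sub hppart)
      simpa using this
    obtain ⟨N, hN⟩ := (hNlim.eventually (eventually_gt_nhds (by linarith : a < ∑' r, d r))).exists
    have hmlim : Tendsto
        (fun m => (∑ r ∈ range N, F m r) + ((∑ r ∈ range N, qb m r) - ∑ r ∈ range N, q m r))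
        atTop (𝓝 ((∑ r ∈ range N, d r) + ((∑ r ∈ range N, pbar r) - ∑ r ∈ range N, p r))) :=
      (hFpart N).add ((hqbpart N).sub (hqpart N))
    filter_upwards [hmlim.eventually (eventually_gt_nhds hN), eventually_ge_atTop 1] with m hm hm1
    exact lt_of_lt_of_le hm (key_lb N m hm1)
  · intro a ha
    have hNlim : Tendsto
        (fun N => (∑ r ∈ range N, d r) + (1 - ∑ r ∈ range N, p r) * log n)
        atTop (𝓝 (∑' r, d r)) := by
      have : Tendsto
          (fun N => (∑ r ∈ range N, d r) + (1 - ∑ r ∈ range N, p r) * log n)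
          atTop (𝓝 ((∑' r, d r) + (1 - 1) * log n)) :=
        hdpart.add (((tendsto_const_nhds).sub hppart).mul_const _)
      simpa using this
    obtain ⟨N, hN⟩ := (hNlim.eventually (eventually_lt_nhds (by linarith : (∑' r, d r) < a))).exists
    have hmlim : Tendsto
        (fun m => (∑ r ∈ range N, F m r) + (1 - ∑ r ∈ range N, q m r) * log n)
        atTop (𝓝 ((∑ r ∈ range N, d r) + (1 - ∑ r ∈ range N, p r) * log n)) :=
      (hFpart N).add (((tendsto_const_nhds).sub (hqpart N)).mul_const _)
    filter_upwards [hmlim.eventually (eventually_lt_nhds hN), eventually_ge_atTop 1] with m hm hm1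
    exact lt_of_le_of_lt (key_ub N m hm1) hm

/-- Statement 3 of the Theorem: the plug-in Kullback–Leibler divergence estimate
converges almost surely to the true divergence. -/
theorem plugin_KL_divergence_converges
    {Ω : Type*} [MeasurableSpace Ω] (μ : Measure Ω) [IsProbabilityMeasure μ]
    (n : ℕ) (hn : 1 ≤ n) (p : Fin n → ℕ → ℝ)
    (hp0 : ∀ t r, 0 ≤ p t r) (hp1 : ∀ t, HasSum (p t) 1)
    (hH : ∀ t, Summable (fun r => -(p t r) * log (p t r)))
    (R : Fin n → ℕ → Ω → ℕ) (hmeas : ∀ t k, Measurable (R t k))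
    (hindep : ∀ t, iIndepFun (R t) μ)
    (hlaw : ∀ t k r, μ {ω | R t k ω = r} = ENNReal.ofReal (p t r))
    (pbar : ℕ → ℝ) (hpbar : ∀ r, pbar r = (1 / n) * ∑ t, p t r)
    (Phat_t : Fin n → ℕ → Ω → ℕ → ℝ)
    (hPhat_t : ∀ t m ω r,
      Phat_t t m ω r = (((Finset.range m).filter (fun k => R t k ω = r)).card : ℝ) / m)
    (Phat : ℕ → Ω → ℕ → ℝ)
    (hPhat : ∀ m ω r, Phat m ω r = (1 / n) * ∑ t, Phat_t t m ω r) :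
    ∀ t, ∀ᵐ ω ∂μ, Tendsto
      (fun m => ∑' r, Phat_t t m ω r * log (Phat_t t m ω r / Phat m ω r))
      atTop (nhds (∑' r, p t r * log (p t r / pbar r))) := by
  classical
  intro t
  have hnR : (0:ℝ) < n := by exact_mod_cast hn
  -- a.s. events
  have h1 : ∀ᵐ ω ∂μ, ∀ (t' : Fin n) (r : ℕ),
      Tendsto (fun m => Phat_t t' m ω r) atTop (𝓝 (p t' r)) := by
    rw [ae_all_iff]
    intro t'
    rw [ae_all_iff]
    intro r
    filter_upwards [slln_freq μ (R t') (hmeas t') (hindep t') (p t') (hp0 t') (hlaw t') r]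
      with ω hω
    exact hω.congr fun m => (hPhat_t t' m ω r).symm
  have h2 : ∀ᵐ ω ∂μ, ∀ (t' : Fin n) (r k : ℕ), p t' r = 0 → R t' k ω ≠ r := by
    rw [ae_all_iff]; intro t'
    rw [ae_all_iff]; intro r
    rw [ae_all_iff]; intro k
    by_cases hp : p t' r = 0
    · have : μ {ω | R t' k ω = r} = 0 := by rw [hlaw t' k r, hp, ENNReal.ofReal_zero]
      filter_upwards [(MeasureTheory.measure_eq_zero_iff_ae_notMem).1 this] with ω hω _
      exact hω
    · exact Filter.Eventually.of_forall fun ω h => absurd h hp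
  filter_upwards [h1, h2] with ω hω1 hω2
  -- deterministic facts about the empirical measures
  have hq0 : ∀ (t' : Fin n) m r, 0 ≤ Phat_t t' m ω r := by
    intro t' m r; rw [hPhat_t]; positivity
  have hqb0 : ∀ m r, 0 ≤ Phat m ω r := by
    intro m r; rw [hPhat]
    exact mul_nonneg (by positivity) (Finset.sum_nonneg fun t' _ => hq0 t' m r)
  have hqle : ∀ m r, Phat_t t m ω r ≤ n * Phat m ω r := by
    intro m r
    rw [hPhat]
    have h := Finset.single_le_sum (f := fun t' => Phat_t t' m ω r)
      (fun t' _ => hq0 t' m r) (Finset.mem_univ t)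
    calc Phat_t t m ω r ≤ ∑ t', Phat_t t' m ω r := h
      _ = (n : ℝ) * ((1/n) * ∑ t', Phat_t t' m ω r) := by field_simp
  have hsupp : ∀ (t' : Fin n) m,
      Function.support (fun r => Phat_t t' m ω r) ⊆
        ↑((Finset.range m).image (fun k => R t' k ω)) := by
    intro t' m r hr
    simp only [Function.mem_support] at hr
    by_contra hc
    apply hr
    rw [hPhat_t]
    have : (Finset.range m).filter (fun k => R t' k ω = r) = ∅ := by
      rw [Finset.filter_eq_empty_iff]
      intro k hk hkr
      exact hc (by rw [← hkr]; exact Finset.mem_image_of_mem _ hk)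
    rw [this]; simp
  have hfin : ∀ (t' : Fin n) m, (Function.support (fun r => Phat_t t' m ω r)).Finite :=
    fun t' m => Set.Finite.subset (Finset.finite_toSet _) (hsupp t' m)
  have hqbfin : ∀ m, (Function.support (fun r => Phat m ω r)).Finite := by
    intro m
    refine Set.Finite.subset (Set.finite_iUnion
      (fun t' : Fin n => hfin t' m)) ?_
    intro r hr
    simp only [Function.mem_support] at hr
    by_contra hc
    apply hr
    rw [hPhat]
    have : ∀ t' : Fin n, Phat_t t' m ω r = 0 := by
      intro t'
      by_contra hne
      exact hc (Set.mem_iUnion.2 ⟨t', hne⟩)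
    simp [this]
  have hq1 : ∀ (t' : Fin n) m, 1 ≤ m → HasSum (fun r => Phat_t t' m ω r) 1 := by
    intro t' m hm
    set s := (Finset.range m).image (fun k => R t' k ω) with hs
    have hzero : ∀ r ∉ s, Phat_t t' m ω r = 0 := by
      intro r hr
      by_contra hne
      exact hr (hsupp t' m hne)
    have h := hasSum_sum_of_ne_finset_zero (s := s) (L := SummationFilter.unconditional ℕ) hzero
    have hval : (∑ r ∈ s, Phat_t t' m ω r) = 1 := by
      have hcard : (Finset.range m).card
          = ∑ b ∈ s, ((Finset.range m).filter (fun k => R t' k ω = b)).card :=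
        Finset.card_eq_sum_card_fiberwise (fun x hx => Finset.mem_image_of_mem _ hx)
      have : (∑ r ∈ s, Phat_t t' m ω r)
          = (∑ r ∈ s, (((Finset.range m).filter (fun k => R t' k ω = r)).card : ℝ)) / m := by
        rw [Finset.sum_div]
        exact Finset.sum_congr rfl fun r _ => hPhat_t t' m ω r
      rw [this, ← Nat.cast_sum, ← hcard, Finset.card_range]
      have hm0 : (m:ℝ) ≠ 0 := by positivity
      field_simp
    rwa [hval] at h
  have hqb1 : ∀ m, 1 ≤ m → HasSum (fun r => Phat m ω r) 1 := by
    intro m hm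
    have h := hasSum_sum (s := Finset.univ)
      (f := fun (t' : Fin n) (r : ℕ) => Phat_t t' m ω r) (a := fun _ => (1:ℝ))
      (fun t' _ => hq1 t' m hm)
    have h2 := h.mul_left (1/(n:ℝ))
    have : (1/(n:ℝ)) * (∑ _t' : Fin n, (1:ℝ)) = 1 := by
      simp [Finset.sum_const]
      field_simp
    rw [this] at h2
    exact h2.congr_fun fun r => by simpa using hPhat m ω r
  -- facts about the limit distributions
  have hpbar1 : HasSum pbar 1 := by
    have h := hasSum_sum (s := Finset.univ)
      (f := fun (t' : Fin n) (r : ℕ) => p t' r) (a := fun _ => (1:ℝ)) (fun t' _ => hp1 t')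
    have h2 := h.mul_left (1/(n:ℝ))
    have : (1/(n:ℝ)) * (∑ _t' : Fin n, (1:ℝ)) = 1 := by
      simp [Finset.sum_const]
      field_simp
    rw [this] at h2
    exact h2.congr_fun fun r => by simpa using hpbar r
  have hpbar0 : ∀ r, 0 ≤ pbar r := by
    intro r; rw [hpbar]
    exact mul_nonneg (by positivity) (Finset.sum_nonneg fun t' _ => hp0 t' r)
  have hple1 : ∀ r, p t r ≤ 1 := fun r => le_hasSum (hp1 t) r (fun b _ => hp0 t b)
  have hpbarle1 : ∀ r, pbar r ≤ 1 := fun r => le_hasSum hpbar1 r (fun b _ => hpbar0 b)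
  have hpbar_ge : ∀ r, p t r ≤ n * pbar r := by
    intro r
    rw [hpbar]
    have h := Finset.single_le_sum (f := fun t' => p t' r)
      (fun t' _ => hp0 t' r) (Finset.mem_univ t)
    calc p t r ≤ ∑ t', p t' r := h
      _ = (n : ℝ) * ((1/n) * ∑ t', p t' r) := by field_simp
  have hdsum : Summable (fun r => p t r * log (p t r / pbar r)) := by
    have hbound : ∀ r, |p t r * log (p t r / pbar r)|
        ≤ 2 * (-(p t r) * log (p t r)) + p t r * log n := by
      intro r
      rcases eq_or_lt_of_le (hp0 t r) with h | h
      · rw [← h]; simp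
      · have hpb : 0 < pbar r := by nlinarith [hpbar_ge r]
        have hlogp : log (p t r) ≤ 0 := Real.log_nonpos h.le (hple1 r)
        have hlogpb : log (pbar r) ≤ 0 := Real.log_nonpos hpb.le (hpbarle1 r)
        have hlb : log (p t r) - log (n:ℝ) ≤ log (pbar r) := by
          have : log (p t r / n) ≤ log (pbar r) :=
            Real.log_le_log (by positivity) ((div_le_iff₀ hnR).2 (by linarith [hpbar_ge r]))
          rwa [Real.log_div h.ne' (by positivity)] at this
        rw [Real.log_div h.ne' hpb.ne', abs_mul, abs_of_pos h]
        rcases abs_cases (log (p t r) - log (pbar r)) with ⟨heq, _⟩ | ⟨heq, _⟩ <;>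
          rw [heq] <;> nlinarith [Real.log_nonneg (show (1:ℝ) ≤ n by exact_mod_cast hn)]
    refine Summable.of_abs ?_
    refine Summable.of_nonneg_of_le (fun r => abs_nonneg _) hbound ?_
    exact ((hH t).mul_left 2).add ((hp1 t).summable.mul_right (log n))
  -- tendsto facts
  have hqtend : ∀ r, Tendsto (fun m => Phat_t t m ω r) atTop (𝓝 (p t r)) := fun r => hω1 t r
  have hqbtend : ∀ r, Tendsto (fun m => Phat m ω r) atTop (𝓝 (pbar r)) := by
    intro r
    have h := (tendsto_finset_sum Finset.univ
      (fun (t' : Fin n) _ => hω1 t' r)).const_mul (1/(n:ℝ))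
    rw [← hpbar r] at h
    exact h.congr fun m => (hPhat m ω r).symm
  have hterm : ∀ r, Tendsto (fun m => Phat_t t m ω r * log (Phat_t t m ω r / Phat m ω r))
      atTop (𝓝 (p t r * log (p t r / pbar r))) := by
    intro r
    rcases eq_or_lt_of_le (hp0 t r) with h | h
    · have hq0' : ∀ m, Phat_t t m ω r = 0 := by
        intro m
        rw [hPhat_t]
        have : (Finset.range m).filter (fun k => R t k ω = r) = ∅ := by
          rw [Finset.filter_eq_empty_iff]
          intro k _
          exact hω2 t r k h.symm
        rw [this]; simp
      have : (fun m => Phat_t t m ω r * log (Phat_t t m ω r / Phat m ω r)) = fun _ => 0 := by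
        funext m; rw [hq0', zero_mul]
      rw [this, ← h, zero_mul]
      exact tendsto_const_nhds
    · have hpb : 0 < pbar r := by nlinarith [hpbar_ge r]
      exact (hqtend r).mul
        (((hqtend r).div (hqbtend r) hpb.ne').log (div_ne_zero h.ne' hpb.ne'))
  exact analytic_main n hn (p t) pbar (fun r => p t r * log (p t r / pbar r)) (fun _ => rfl)
    (hp1 t) hpbar1 hdsum (fun m r => Phat_t t m ω r) (fun m r => Phat m ω r)
    (fun m r => hq0 t m r) hqb0 hqle (hq1 t) hqb1 (hfin t) hqbfin hterm hqtend hqbtend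
end
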